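/- Let C, C₁, r₀ > 0 and let λ : [r₀, ∞) → ℝ be differentiable with 0 ≤ λ(r) ≤ C₁ and 1 - C·e^{-2r} ≤ λ'(r) + λ(r)² ≤ 1 + C·e^{-2r} for all r ≥ r₀. Then for every β < 1 there is a constant C₃ such that |λ(r) - 1| ≤ C₃·e^{-(3/2)β r} for all r ≥ r₀. -/

import Mathlib

open Real

/-- If `h` is differentiable on `[r₀,∞)` with nonpositive derivative there,
then `h r ≤ h r₀` for `r ≥ r₀`. -/
lemma riccati_aux_decreasing (r₀ : ℝ) (h : ℝ → ℝ)
    (hd : ∀ r ≥ r₀, DifferentiableAt ℝ h r)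
    (hd0 : ∀ r ≥ r₀, deriv h r ≤ 0) :
    ∀ r ≥ r₀, h r ≤ h r₀ := by
  intro r hr
  have H : AntitoneOn h (Set.Ici r₀) := by
    apply antitoneOn_of_deriv_nonpos (convex_Ici r₀)
    · exact fun x hx => (hd x hx).continuousAt.continuousWithinAt
    · intro x hx
      rw [interior_Ici] at hx
      exact (hd x (le_of_lt hx)).differentiableWithinAt
    · intro x hx
      rw [interior_Ici] at hx
      exact hd0 x (le_of_lt hx)
  exact H Set.self_mem_Ici hr hr

set_option maxHeartbeats 1600000 in
/-- Improved decay estimate of Lemma 2.2: a bounded solution of the Riccati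
inequality `1 - Ce^{-2r} ≤ λ' + λ² ≤ 1 + Ce^{-2r}` with `0 ≤ λ ≤ C₁` satisfies
`|λ(r) - 1| ≤ C₃ e^{-(3/2)β r}` for every `β < 1`. -/
theorem riccati_improved_decay (C C₁ r₀ : ℝ) (hC : 0 < C) (hC₁ : 0 < C₁) (hr₀ : 0 < r₀)
    (lam : ℝ → ℝ) (hdiff : ∀ r ≥ r₀, DifferentiableAt ℝ lam r)
    (hbound : ∀ r ≥ r₀, 0 ≤ lam r ∧ lam r ≤ C₁)
    (hineq : ∀ r ≥ r₀,
      1 - C * Real.exp (-2 * r) ≤ deriv lam r + (lam r) ^ 2 ∧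
      deriv lam r + (lam r) ^ 2 ≤ 1 + C * Real.exp (-2 * r)) :
    ∀ β < (1 : ℝ), ∃ C₃ : ℝ, ∀ r ≥ r₀,
      |lam r - 1| ≤ C₃ * Real.exp (-(3 / 2) * β * r) := by
  intro β hβ
  set b : ℝ := max β (1/2) with hbdef
  have hb0 : (0:ℝ) < b := lt_of_lt_of_le (by norm_num) (le_max_right _ _)
  have hb1 : b < 1 := max_lt hβ (by norm_num)
  have hβb : β ≤ b := le_max_left _ _
  set v : ℝ → ℝ := fun r => (lam r - 1)^2 with hvdef
  have hv0 : ∀ r, 0 ≤ v r := fun r => sq_nonneg _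
  have hvd : ∀ r ≥ r₀, HasDerivAt v (2*(lam r - 1)*deriv lam r) r := by
    intro r hr
    have h1 : HasDerivAt (fun x => lam x - 1) (deriv lam r) r :=
      ((hdiff r hr).hasDerivAt).sub_const 1
    have h2 := h1.pow 2
    norm_num at h2
    exact h2
  -- Step 1 : Gronwall with rate 2 (and a linear factor)
  set A : ℝ := 2*(C₁+1)*C with hAdef
  have hA : 0 < A := by positivity
  have key1 : ∀ r ≥ r₀, 2*(lam r - 1)*deriv lam r + 2 * v r ≤ A * exp (-2*r) := by
    intro r hr
    obtain ⟨h1, h2⟩ := hineq r hr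
    obtain ⟨h3, h4⟩ := hbound r hr
    have e1 : (0:ℝ) ≤ lam r - 1 + (C₁+1) := by linarith
    have e2 : (0:ℝ) ≤ (C₁+1) - (lam r - 1) := by linarith
    have e3 : (0:ℝ) ≤ C*exp (-2*r) - (deriv lam r + lam r^2 - 1) := by linarith
    have e4 : (0:ℝ) ≤ C*exp (-2*r) + (deriv lam r + lam r^2 - 1) := by linarith
    have e5 : (0:ℝ) ≤ lam r * (lam r - 1)^2 := mul_nonneg h3 (sq_nonneg _)
    simp only [hvdef, hAdef]
    nlinarith [mul_nonneg e1 e3, mul_nonneg e2 e4]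
  have hd1 : ∀ r ≥ r₀, HasDerivAt (fun s => exp (2*s) * v s - A * s)
      (exp (2*r) * (2*(lam r - 1)*deriv lam r + 2 * v r) - A) r := by
    intro r hr
    have he : HasDerivAt (fun s : ℝ => exp (2*s)) (exp (2*r) * 2) r :=
      HasDerivAt.exp (by simpa using (hasDerivAt_id r).const_mul (2:ℝ))
    have hAy : HasDerivAt (fun s : ℝ => A * s) A r := by
      simpa using (hasDerivAt_id r).const_mul A
    have := (he.mul (hvd r hr)).sub hAy
    exact this.congr_deriv (by ring)
  have mono1 : ∀ r ≥ r₀, exp (2*r) * v r - A * r ≤ exp (2*r₀) * v r₀ - A * r₀ := by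
    apply riccati_aux_decreasing
    · exact fun r hr => (hd1 r hr).differentiableAt
    · intro r hr
      rw [(hd1 r hr).deriv]
      have hc : exp (2*r) * exp (-2*r) = 1 := by
        rw [← Real.exp_add]; norm_num
      have := mul_le_mul_of_nonneg_left (key1 r hr) (exp_pos (2*r)).le
      nlinarith [this, hc]
  set D : ℝ := exp (2*r₀) * v r₀ with hDdef
  have hD0 : 0 ≤ D := mul_nonneg (exp_pos _).le (hv0 _)
  have v1 : ∀ r ≥ r₀, exp (2*r) * v r ≤ D + A * r := by
    intro r hr
    have := mono1 r hr
    nlinarith [mul_pos hA hr₀]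
  -- Step 1 conclusion: v ≤ K2 * exp(-2 b r)
  set c : ℝ := 2*(1-b) with hcdef
  have hc0 : 0 < c := by simp [hcdef]; linarith
  set K2 : ℝ := D + A/c with hK2def
  have hK20 : 0 ≤ K2 := by positivity
  have v2 : ∀ r ≥ r₀, v r ≤ K2 * exp (-(2*b)*r) := by
    intro r hr
    have hrpos : 0 < r := lt_of_lt_of_le hr₀ hr
    -- r * exp(-c*r) ≤ 1/c  and  exp(-c*r) ≤ 1
    have hexp1 : exp (-(c*r)) ≤ 1 := by
      rw [Real.exp_le_one_iff]
      nlinarith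
    have hcr : c*r ≤ exp (c*r) := by
      have := Real.add_one_le_exp (c*r); linarith
    have hcc : exp (c*r) * exp (-(c*r)) = 1 := by
      rw [← Real.exp_add]; norm_num
    have hre : r * exp (-(c*r)) ≤ 1/c := by
      have h5 := mul_le_mul_of_nonneg_right hcr (exp_pos (-(c*r))).le
      rw [hcc] at h5
      rw [le_div_iff₀ hc0]
      nlinarith [h5]
    -- split exp(-2r) = exp(-(c r)) * exp(-(2 b r))
    have hsplit : exp (-(2:ℝ)*r) = exp (-(c*r)) * exp (-(2*b)*r) := by
      rw [← Real.exp_add]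
      congr 1
      simp [hcdef]; ring
    have h6 := v1 r hr
    have h7 : (D + A*r) * exp (-(c*r)) ≤ K2 := by
      have hD' : D * exp (-(c*r)) ≤ D :=
        mul_le_of_le_one_right hD0 hexp1
      have hA' : A * (r * exp (-(c*r))) ≤ A * (1/c) :=
        mul_le_mul_of_nonneg_left hre hA.le
      have : A/c = A * (1/c) := by ring
      rw [hK2def, this]
      nlinarith
    -- now v r = exp(2r) v r * exp(-2r) ≤ (D+Ar) exp(-2r) = [(D+Ar)exp(-cr)] exp(-2br)
    have hcancel : exp (2*r) * exp (-(2:ℝ)*r) = 1 := by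
      rw [← Real.exp_add]; norm_num
    have h8 : v r ≤ (D + A*r) * exp (-(2:ℝ)*r) := by
      have hh := mul_le_mul_of_nonneg_right h6 (exp_pos (-(2:ℝ)*r)).le
      have heq : exp (2*r) * v r * exp (-(2:ℝ)*r) = v r := by
        rw [mul_right_comm, hcancel, one_mul]
      linarith [hh, heq.ge, heq.le]
    calc v r ≤ (D + A*r) * exp (-(2:ℝ)*r) := h8
      _ = ((D + A*r) * exp (-(c*r))) * exp (-(2*b)*r) := by rw [hsplit]; ring
      _ ≤ K2 * exp (-(2*b)*r) :=
          mul_le_mul_of_nonneg_right h7 (exp_pos _).le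
  set K : ℝ := Real.sqrt K2 with hKdef
  have hK0 : 0 ≤ K := Real.sqrt_nonneg _
  have hKsq : K^2 = K2 := Real.sq_sqrt hK20
  have u_bound : ∀ r ≥ r₀, |lam r - 1| ≤ K * exp (-(b*r)) := by
    intro r hr
    have h1 : |lam r - 1| = Real.sqrt (v r) := (Real.sqrt_sq_eq_abs _).symm
    rw [h1]
    have h2 : exp (-(2*b)*r) = (exp (-(b*r)))^2 := by
      rw [sq, ← Real.exp_add]; congr 1; ring
    have h3 : K2 * exp (-(2*b)*r) = (K * exp (-(b*r)))^2 := by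
      rw [h2, mul_pow, hKsq]
    have h4 := Real.sqrt_le_sqrt (le_trans (v2 r hr) (le_of_eq h3))
    rwa [Real.sqrt_sq (mul_nonneg hK0 (exp_pos _).le)] at h4
  -- Step 2 : bootstrap
  set M : ℝ := 2*K^3 + 2*K*C with hMdef
  have hM0 : 0 ≤ M := by positivity
  have key2 : ∀ r ≥ r₀, 2*(lam r - 1)*deriv lam r + 4 * v r ≤ M * (exp (-(b*r)))^3 := by
    intro r hr
    obtain ⟨h1, h2⟩ := hineq r hr
    have hrpos : 0 < r := lt_of_lt_of_le hr₀ hr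
    have hu := u_bound r hr
    rw [abs_le] at hu
    obtain ⟨hu1, hu2⟩ := hu
    set u := lam r - 1 with hudef
    set E1 := exp (-(b*r)) with hE1def
    set E2 := exp (-2*r) with hE2def
    have hE1 : 0 < E1 := exp_pos _
    have hE2 : 0 < E2 := exp_pos _
    have hEE : E2 ≤ E1^2 := by
      rw [hE1def, hE2def, sq, ← Real.exp_add]
      apply Real.exp_le_exp.mpr
      nlinarith
    have p1 : (0:ℝ) ≤ (K*E1 - u) * (C*E2 + (deriv lam r + lam r^2 - 1)) := by
      apply mul_nonneg <;> linarith
    have p2 : (0:ℝ) ≤ (K*E1 + u) * (C*E2 - (deriv lam r + lam r^2 - 1)) := by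
      apply mul_nonneg <;> linarith
    have p3 : (0:ℝ) ≤ (K*E1 + u) * ((u - K*E1/2)^2 + (3/4)*(K*E1)^2) := by
      apply mul_nonneg
      · linarith
      · positivity
    have p4 : (0:ℝ) ≤ C*K*E1*(E1^2 - E2) := by
      apply mul_nonneg
      · positivity
      · linarith
    simp only [hvdef, hMdef, ← hudef]
    nlinarith [p1, p2, p3, p4]
  set μ : ℝ := 4 - 3*b with hμdef
  have hμ0 : 0 < μ := by simp [hμdef]; nlinarith
  have hd2 : ∀ r ≥ r₀, HasDerivAt (fun s => exp (4*s) * v s - (M/μ) * exp (μ*s))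
      (exp (4*r) * (2*(lam r - 1)*deriv lam r + 4 * v r) - M * exp (μ*r)) r := by
    intro r hr
    have he : HasDerivAt (fun s : ℝ => exp (4*s)) (exp (4*r) * 4) r :=
      HasDerivAt.exp (by simpa using (hasDerivAt_id r).const_mul (4:ℝ))
    have he2 : HasDerivAt (fun s : ℝ => exp (μ*s)) (exp (μ*r) * μ) r :=
      HasDerivAt.exp (by simpa using (hasDerivAt_id r).const_mul μ)
    have := (he.mul (hvd r hr)).sub (he2.const_mul (M/μ))
    exact this.congr_deriv (by rw [mul_comm (exp (μ*r)) μ, show M / μ * (μ * exp (μ*r)) = M * exp (μ*r) by rw [← mul_assoc, div_mul_cancel₀ M hμ0.ne']]; ring)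
  have mono2 : ∀ r ≥ r₀, exp (4*r) * v r - (M/μ) * exp (μ*r)
      ≤ exp (4*r₀) * v r₀ - (M/μ) * exp (μ*r₀) := by
    apply riccati_aux_decreasing
    · exact fun r hr => (hd2 r hr).differentiableAt
    · intro r hr
      rw [(hd2 r hr).deriv]
      have hc4 : exp (4*r) * (exp (-(b*r)))^3 = exp (μ*r) := by
        rw [pow_succ, sq, ← Real.exp_add, ← Real.exp_add, ← Real.exp_add]
        congr 1
        simp [hμdef]; ring
      have := mul_le_mul_of_nonneg_left (key2 r hr) (exp_pos (4*r)).le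
      nlinarith [this, hc4]
  set D4 : ℝ := exp (4*r₀) * v r₀ with hD4def
  have hD40 : 0 ≤ D4 := mul_nonneg (exp_pos _).le (hv0 _)
  set N : ℝ := D4 + M/μ with hNdef
  have hN0 : 0 ≤ N := by positivity
  have v3 : ∀ r ≥ r₀, v r ≤ N * exp (-(3*b)*r) := by
    intro r hr
    have hrpos : 0 < r := lt_of_lt_of_le hr₀ hr
    have h6 := mono2 r hr
    have hμr : 0 < exp (μ*r₀) := exp_pos _
    have h7 : exp (4*r) * v r ≤ D4 + (M/μ) * exp (μ*r) := by
      nlinarith [mul_nonneg (div_nonneg hM0 hμ0.le) hμr.le]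
    have hcancel : exp (4*r) * exp (-(4:ℝ)*r) = 1 := by
      rw [← Real.exp_add]; norm_num
    have h8 : v r ≤ (D4 + (M/μ) * exp (μ*r)) * exp (-(4:ℝ)*r) := by
      have hh := mul_le_mul_of_nonneg_right h7 (exp_pos (-(4:ℝ)*r)).le
      have heq : exp (4*r) * v r * exp (-(4:ℝ)*r) = v r := by
        rw [mul_right_comm, hcancel, one_mul]
      linarith [hh, heq.ge, heq.le]
    have he1 : exp (μ*r) * exp (-(4:ℝ)*r) = exp (-(3*b)*r) := by
      rw [← Real.exp_add]; congr 1; simp [hμdef]; ring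
    have he2 : exp (-(4:ℝ)*r) ≤ exp (-(3*b)*r) := by
      apply Real.exp_le_exp.mpr
      nlinarith
    have h9 : (D4 + (M/μ) * exp (μ*r)) * exp (-(4:ℝ)*r)
        = D4 * exp (-(4:ℝ)*r) + (M/μ) * (exp (μ*r) * exp (-(4:ℝ)*r)) := by ring
    rw [h9, he1] at h8
    have h10 : D4 * exp (-(4:ℝ)*r) ≤ D4 * exp (-(3*b)*r) :=
      mul_le_mul_of_nonneg_left he2 hD40
    have h11 : N * exp (-(3*b)*r) = D4 * exp (-(3*b)*r) + (M/μ) * exp (-(3*b)*r) := by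
      rw [hNdef]; ring
    calc v r ≤ D4 * exp (-(4:ℝ)*r) + (M/μ) * exp (-(3*b)*r) := h8
      _ ≤ D4 * exp (-(3*b)*r) + (M/μ) * exp (-(3*b)*r) := by linarith [h10]
      _ = N * exp (-(3*b)*r) := h11.symm
  -- Final conclusion
  refine ⟨Real.sqrt N, fun r hr => ?_⟩
  have hrpos : 0 < r := lt_of_lt_of_le hr₀ hr
  have h1 : |lam r - 1| = Real.sqrt (v r) := (Real.sqrt_sq_eq_abs _).symm
  have h2 : exp (-(3*b)*r) = (exp (-(3/2)*b*r))^2 := by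
    rw [sq, ← Real.exp_add]; congr 1; ring
  have h3 : N * exp (-(3*b)*r) = (Real.sqrt N * exp (-(3/2)*b*r))^2 := by
    rw [h2, mul_pow, Real.sq_sqrt hN0]
  have h4 := Real.sqrt_le_sqrt (le_trans (v3 r hr) (le_of_eq h3))
  rw [Real.sqrt_sq (mul_nonneg (Real.sqrt_nonneg _) (exp_pos _).le)] at h4
  rw [h1]
  refine le_trans h4 ?_
  have hee : exp (-(3/2)*b*r) ≤ exp (-(3/2)*β*r) := by
    apply Real.exp_le_exp.mpr
    nlinarith
  exact mul_le_mul_of_nonneg_left hee (Real.sqrt_nonneg N)
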